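/- Let X = X₁ ⊕ ⋯ ⊕ Xₙ be a direct sum decomposition of the Hilbert 𝔄-module X whose submodules are pairwise orthogonal (⟨x,y⟩ = 0 for x ∈ Xᵢ, y ∈ Xⱼ, i ≠ j), and let Qᵢ : X → Xᵢ be the natural projections. Then the decomposition is small with respect to (‖·‖*ₙ): for all x₁,…,xₙ ∈ X, ‖Q₁x₁ + ⋯ + Qₙxₙ‖ ≤ ‖(x₁,…,xₙ)‖*ₙ. -/

import Mathlib

open scoped RightActions

/-- The December 2024 Mathlib `CStarModule` (right `A`-module via `Aᵐᵒᵖ`), whose meaning has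
since changed in Mathlib; restated here with its old definition. -/
class CStarModuleOld (A : outParam <| Type*) (E : Type*) [NonUnitalSemiring A] [StarRing A]
    [Module ℂ A] [AddCommGroup E] [Module ℂ E] [PartialOrder A] [SMul Aᵐᵒᵖ E] [Norm A] [Norm E]
    extends Inner A E where
  inner_add_right {x} {y} {z} : inner x (y + z) = inner x y + inner x z
  inner_self_nonneg {x} : 0 ≤ inner x x
  inner_self {x} : inner x x = 0 ↔ x = 0
  inner_op_smul_right {a : A} {x y : E} : inner x (y <• a) = inner x y * a
  inner_smul_right_complex {z : ℂ} {x} {y} : inner x (z • y) = z • inner x y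
  star_inner x y : star (inner x y) = inner y x
  norm_eq_sqrt_norm_inner_self x : ‖x‖ = Real.sqrt ‖inner x x‖

variable (A : Type*) {E : Type*} [NonUnitalCStarAlgebra A] [PartialOrder A] [StarOrderedRing A]
  [NormedAddCommGroup E] [Module ℂ E] [SMul Aᵐᵒᵖ E] [CStarModuleOld A E]

/-- `μ*ₙ(y₁,…,yₙ) = sup { ‖(Σᵢ |⟨yᵢ,z⟩|²)^{1/2}‖ : z ∈ X, ‖z‖ ≤ 1 }`. -/
noncomputable def mustar (n : ℕ) (y : Fin n → E) : ℝ :=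
  sSup {r : ℝ | ∃ z : E, ‖z‖ ≤ 1 ∧
    r = Real.sqrt ‖∑ i, star (inner A (y i) z : A) * (inner A (y i) z : A)‖}

/-- `‖x‖*ₙ = sup { ‖Σᵢ |⟨yᵢ,xᵢ⟩|²‖^{1/2} : μ*ₙ(y₁,…,yₙ) ≤ 1 }`. -/
noncomputable def starNorm (n : ℕ) (x : Fin n → E) : ℝ :=
  sSup {r : ℝ | ∃ y : Fin n → E, mustar A n y ≤ 1 ∧
    r = Real.sqrt ‖∑ i, star (inner A (y i) (x i) : A) * (inner A (y i) (x i) : A)‖}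

section OldLemmas

variable {A}

lemma CStarModuleOld.inner_zero_right {x : E} : inner A x (0 : E) = 0 := by
  have h := CStarModuleOld.inner_add_right (A := A) (x := x) (y := 0) (z := 0)
  simpa using h

lemma CStarModuleOld.inner_add_left {x y z : E} :
    inner A (x + y) z = inner A x z + inner A y z := by
  rw [← CStarModuleOld.star_inner z (x + y), CStarModuleOld.inner_add_right, star_add,
    CStarModuleOld.star_inner, CStarModuleOld.star_inner]

lemma CStarModuleOld.inner_zero_left {x : E} : inner A (0 : E) x = 0 := by
  rw [← CStarModuleOld.star_inner x 0, CStarModuleOld.inner_zero_right, star_zero]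

/-- inner product as additive map in the second variable -/
def CStarModuleOld.innerR (x : E) : E →+ A where
  toFun y := inner A x y
  map_zero' := CStarModuleOld.inner_zero_right
  map_add' _ _ := CStarModuleOld.inner_add_right

/-- inner product as additive map in the first variable -/
def CStarModuleOld.innerL (y : E) : E →+ A where
  toFun x := inner A x y
  map_zero' := CStarModuleOld.inner_zero_left
  map_add' _ _ := CStarModuleOld.inner_add_left

lemma CStarModuleOld.inner_sub_right {x y z : E} :
    inner A x (y - z) = inner A x y - inner A x z :=
  (CStarModuleOld.innerR (A := A) x).map_sub y z

lemma CStarModuleOld.inner_sub_left {x y z : E} :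
    inner A (x - y) z = inner A x z - inner A y z :=
  (CStarModuleOld.innerL (A := A) z).map_sub x y

lemma CStarModuleOld.inner_sum_right {ι : Type*} {s : Finset ι} {x : E} {y : ι → E} :
    inner A x (∑ i ∈ s, y i) = ∑ i ∈ s, inner A x (y i) :=
  map_sum (CStarModuleOld.innerR (A := A) x) y s

lemma CStarModuleOld.inner_sum_left {ι : Type*} {s : Finset ι} {x : ι → E} {y : E} :
    inner A (∑ i ∈ s, x i) y = ∑ i ∈ s, inner A (x i) y :=
  map_sum (CStarModuleOld.innerL (A := A) y) x s

lemma CStarModuleOld.inner_op_smul_left {a : A} {x y : E} :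
    inner A (x <• a) y = star a * inner A x y := by
  rw [← CStarModuleOld.star_inner y (x <• a), CStarModuleOld.inner_op_smul_right, star_mul,
    CStarModuleOld.star_inner]

lemma CStarModuleOld.inner_smul_left_complex {z : ℂ} {x y : E} :
    inner A (z • x) y = star z • inner A x y := by
  rw [← CStarModuleOld.star_inner y (z • x), CStarModuleOld.inner_smul_right_complex, star_smul,
    CStarModuleOld.star_inner]

lemma CStarModuleOld.inner_smul_right_real {z : ℝ} {x y : E} :
    inner A x (z • y) = z • inner A x y := by
  have h₁ : z • y = (z : ℂ) • y := by simp
  rw [h₁, CStarModuleOld.inner_smul_right_complex]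
  simp

lemma CStarModuleOld.inner_smul_left_real {z : ℝ} {x y : E} :
    inner A (z • x) y = z • inner A x y := by
  have h₁ : z • x = (z : ℂ) • x := by simp
  rw [h₁, CStarModuleOld.inner_smul_left_complex]
  simp

lemma CStarModuleOld.isSelfAdjoint_inner_self {x : E} : IsSelfAdjoint (inner A x x) :=
  CStarModuleOld.star_inner _ _

lemma CStarModuleOld.norm_sq_eq {x : E} : ‖x‖ ^ 2 = ‖inner A x x‖ := by
  rw [CStarModuleOld.norm_eq_sqrt_norm_inner_self (A := A), Real.sq_sqrt (norm_nonneg _)]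

lemma CStarModuleOld.inner_mul_inner_swap_le {x y : E} :
    inner A y x * inner A x y ≤ ‖x‖ ^ 2 • inner A y y := by
  rcases eq_or_ne x 0 with h | h
  · simp [h, CStarModuleOld.inner_zero_left, CStarModuleOld.inner_zero_right]
  · have h₁ : ∀ (a : A),
        (0 : A) ≤ ‖x‖ ^ 2 • (star a * a) - ‖x‖ ^ 2 • (star a * inner A x y)
                  - ‖x‖ ^ 2 • (inner A y x * a) + ‖x‖ ^ 2 • (‖x‖ ^ 2 • inner A y y) := fun a => by
      calc (0 : A) ≤ inner A (x <• a - ‖x‖ ^ 2 • y) (x <• a - ‖x‖ ^ 2 • y) := by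
                      exact CStarModuleOld.inner_self_nonneg
            _ = star a * inner A x x * a - ‖x‖ ^ 2 • (star a * inner A x y)
                  - ‖x‖ ^ 2 • (inner A y x * a) + ‖x‖ ^ 2 • (‖x‖ ^ 2 • inner A y y) := by
                      simp only [CStarModuleOld.inner_sub_right, CStarModuleOld.inner_op_smul_right,
                        CStarModuleOld.inner_sub_left, CStarModuleOld.inner_op_smul_left,
                        CStarModuleOld.inner_smul_left_real, CStarModuleOld.inner_smul_right_real,
                        sub_mul, mul_sub, smul_mul_assoc, smul_sub, mul_assoc]
                      abel
            _ ≤ ‖x‖ ^ 2 • (star a * a) - ‖x‖ ^ 2 • (star a * inner A x y)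
                  - ‖x‖ ^ 2 • (inner A y x * a) + ‖x‖ ^ 2 • (‖x‖ ^ 2 • inner A y y) := by
                      gcongr
                      calc _ ≤ ‖inner A x x‖ • (star a * a) :=
                          CStarAlgebra.star_left_conjugate_le_norm_smul
                            (hb := CStarModuleOld.isSelfAdjoint_inner_self)
                        _ = (√‖inner A x x‖) ^ 2 • (star a * a) := by
                          rw [Real.sq_sqrt]
                          positivity
                        _ = ‖x‖ ^ 2 • (star a * a) := by
                          rw [← CStarModuleOld.norm_eq_sqrt_norm_inner_self]
    specialize h₁ (inner A x y)
    simp only [CStarModuleOld.star_inner, sub_self, zero_sub, le_neg_add_iff_add_le,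
      add_zero] at h₁
    rwa [smul_le_smul_iff_of_pos_left (pow_pos (norm_pos_iff.mpr h) _)] at h₁

variable (E) in
lemma CStarModuleOld.norm_inner_le {x y : E} : ‖inner A x y‖ ≤ ‖x‖ * ‖y‖ := by
  have := calc ‖inner A x y‖ ^ 2 = ‖inner A y x * inner A x y‖ := by
                rw [← CStarModuleOld.star_inner x y, CStarRing.norm_star_mul_self, pow_two]
    _ ≤ ‖‖x‖ ^ 2 • inner A y y‖ := by
                refine CStarAlgebra.norm_le_norm_of_nonneg_of_le ?_
                  CStarModuleOld.inner_mul_inner_swap_le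
                rw [← CStarModuleOld.star_inner x y]
                exact star_mul_self_nonneg _
    _ = ‖x‖ ^ 2 * ‖inner A y y‖ := by simp [norm_smul]
    _ = ‖x‖ ^ 2 * ‖y‖ ^ 2 := by rw [CStarModuleOld.norm_sq_eq (A := A) (x := y)]
    _ = (‖x‖ * ‖y‖) ^ 2 := by ring
  exact (pow_le_pow_iff_left₀ (norm_nonneg _) (by positivity) (by simp)).mp this

end OldLemmas

private lemma sqrt_add_le' (a b : ℝ) (hb : 0 ≤ b) :
    Real.sqrt (a + b) ≤ Real.sqrt a + Real.sqrt b := by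
  rcases le_or_gt a 0 with ha | ha
  · calc Real.sqrt (a + b) ≤ Real.sqrt b := Real.sqrt_le_sqrt (by linarith)
      _ ≤ _ := le_add_of_nonneg_left (Real.sqrt_nonneg a)
  · rw [Real.sqrt_le_iff]
    refine ⟨by positivity, ?_⟩
    nlinarith [Real.sq_sqrt ha.le, Real.sq_sqrt hb, Real.sqrt_nonneg a, Real.sqrt_nonneg b,
      mul_nonneg (Real.sqrt_nonneg a) (Real.sqrt_nonneg b)]

/-- the `i`-th term is dominated in norm by the full sum of `star (b i) * b i`. -/
private lemma norm_term_le_norm_sum {n : ℕ} (b : Fin n → A) (i : Fin n) :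
    ‖star (b i) * b i‖ ≤ ‖∑ j, star (b j) * b j‖ :=
  CStarAlgebra.norm_le_norm_of_nonneg_of_le (star_mul_self_nonneg _)
    (Finset.single_le_sum (fun j _ => star_mul_self_nonneg (b j)) (Finset.mem_univ i))

private lemma norm_sum_le_sum_sq {n : ℕ} (b : Fin n → A) :
    ‖∑ j, star (b j) * b j‖ ≤ ∑ j, ‖b j‖ ^ 2 := by
  refine (norm_sum_le _ _).trans (Finset.sum_le_sum fun j _ => ?_)
  rw [CStarRing.norm_star_mul_self, sq]

/-- If `mustar A n y ≤ 1` then every component satisfies `‖y i‖ ≤ 1`. -/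
private lemma norm_le_one_of_mustar_le_one {n : ℕ} (y : Fin n → E)
    (h : mustar A n y ≤ 1) (i : Fin n) : ‖y i‖ ≤ 1 := by
  rcases eq_or_ne (y i) 0 with h0 | h0
  · simp [h0]
  have hpos : 0 < ‖y i‖ := norm_pos_iff.mpr h0
  set z : E := ((‖y i‖ : ℂ))⁻¹ • y i with hz
  have hinner : (inner A (y i) z : A) = ((‖y i‖ : ℂ))⁻¹ • (inner A (y i) (y i) : A) := by
    rw [hz, CStarModuleOld.inner_smul_right_complex]
  have hzz : (inner A z z : A)
      = (((‖y i‖ : ℂ))⁻¹ * ((‖y i‖ : ℂ))⁻¹) • (inner A (y i) (y i) : A) := by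
    rw [hz, CStarModuleOld.inner_smul_right_complex, CStarModuleOld.inner_smul_left_complex,
      smul_smul]
    congr 1
    rw [mul_comm]
    congr 1
    rw [star_inv₀, Complex.star_def, Complex.conj_ofReal]
  have hnyy : ‖(inner A (y i) (y i) : A)‖ = ‖y i‖ ^ 2 := (CStarModuleOld.norm_sq_eq (A := A)).symm
  have hznorm : ‖z‖ ≤ 1 := by
    rw [CStarModuleOld.norm_eq_sqrt_norm_inner_self (A := A), hzz, norm_smul]
    have : ‖((‖y i‖ : ℂ))⁻¹ * ((‖y i‖ : ℂ))⁻¹‖ = (‖y i‖ ^ 2)⁻¹ := by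
      rw [norm_mul, norm_inv, Complex.norm_real, Real.norm_of_nonneg hpos.le, sq, mul_inv]
    rw [this, hnyy, inv_mul_cancel₀ (by positivity), Real.sqrt_one]
  -- the element of the `mustar` set corresponding to `z`
  have hmem : Real.sqrt ‖∑ j, star (inner A (y j) z : A) * (inner A (y j) z : A)‖ ∈
      {r : ℝ | ∃ z : E, ‖z‖ ≤ 1 ∧
        r = Real.sqrt ‖∑ j, star (inner A (y j) z : A) * (inner A (y j) z : A)‖} :=
    ⟨z, hznorm, rfl⟩
  have hbdd : BddAbove {r : ℝ | ∃ z : E, ‖z‖ ≤ 1 ∧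
      r = Real.sqrt ‖∑ j, star (inner A (y j) z : A) * (inner A (y j) z : A)‖} := by
    refine ⟨Real.sqrt (∑ j, ‖y j‖ ^ 2), ?_⟩
    rintro r ⟨w, hw, rfl⟩
    refine Real.sqrt_le_sqrt ((norm_sum_le_sum_sq A _).trans (Finset.sum_le_sum fun j _ => ?_))
    have := CStarModuleOld.norm_inner_le (A := A) (x := y j) (y := w)
    have h1 : ‖(inner A (y j) w : A)‖ ≤ ‖y j‖ := by
      calc ‖(inner A (y j) w : A)‖ ≤ ‖y j‖ * ‖w‖ := this
        _ ≤ ‖y j‖ * 1 := by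
            exact mul_le_mul_of_nonneg_left hw (norm_nonneg _)
        _ = ‖y j‖ := mul_one _
    calc ‖(inner A (y j) w : A)‖ ^ 2 ≤ ‖y j‖ ^ 2 := by
          exact pow_le_pow_left₀ (norm_nonneg _) h1 2
      _ ≤ _ := le_rfl
  have h1 : Real.sqrt ‖∑ j, star (inner A (y j) z : A) * (inner A (y j) z : A)‖ ≤ 1 :=
    le_trans (le_csSup hbdd hmem) h
  -- but this sqrt is at least ‖y i‖
  have h2 : ‖y i‖ ≤ Real.sqrt ‖∑ j, star (inner A (y j) z : A) * (inner A (y j) z : A)‖ := by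
    have hterm : ‖star (inner A (y i) z : A) * (inner A (y i) z : A)‖
        ≤ ‖∑ j, star (inner A (y j) z : A) * (inner A (y j) z : A)‖ :=
      norm_term_le_norm_sum A (fun j => (inner A (y j) z : A)) i
    have hni : ‖(inner A (y i) z : A)‖ = ‖y i‖ := by
      rw [hinner, norm_smul, norm_inv, Complex.norm_real, Real.norm_of_nonneg hpos.le, hnyy,
        sq]
      field_simp
    have : ‖star (inner A (y i) z : A) * (inner A (y i) z : A)‖ = ‖y i‖ ^ 2 := by
      rw [CStarRing.norm_star_mul_self, hni, sq]
    calc ‖y i‖ = Real.sqrt (‖y i‖ ^ 2) := by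
          rw [Real.sqrt_sq hpos.le]
      _ ≤ _ := Real.sqrt_le_sqrt (this ▸ hterm)
  exact h2.trans h1

set_option maxHeartbeats 1000000 in
/-- A direct sum decomposition of a Hilbert C*-module into pairwise orthogonal closed
submodules is small with respect to `(‖·‖*ₙ)`: `‖Q₁x₁ + ⋯ + Qₙxₙ‖ ≤ ‖(x₁,…,xₙ)‖*ₙ`,
where `Qᵢ` are the natural projections. -/
theorem decomposition_small_starNorm [CompleteSpace E]
    (n : ℕ) (Y : Fin n → Submodule ℂ E)
    (hclosed : ∀ i, IsClosed (Y i : Set E))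
    (hsmul : ∀ i, ∀ (a : A), ∀ y ∈ Y i, MulOpposite.op a • y ∈ Y i)
    (hcompl : ∀ i, ∀ v : E, ∃ y z : E, y ∈ Y i ∧ v = y + z ∧
      ∀ y' ∈ Y i, (inner A y' z : A) = 0)
    (huniq : ∀ v : E, ∃! f : Fin n → E, (∀ i, f i ∈ Y i) ∧ ∑ i, f i = v)
    (horth : ∀ i j, i ≠ j → ∀ x ∈ Y i, ∀ y ∈ Y j, (inner A x y : A) = 0)
    (Q : Fin n → E → E)
    (hQmem : ∀ v : E, ∀ i, Q i v ∈ Y i)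
    (hQsum : ∀ v : E, ∑ i, Q i v = v)
    (x : Fin n → E) :
    ‖∑ i, Q i (x i)‖ ≤ starNorm A n x := by
  classical
  set s : E := ∑ i, Q i (x i) with hs
  -- for u ∈ Y i, ⟨u, z⟩ = ⟨u, Q i z⟩
  have key : ∀ (i : Fin n) (u : E), u ∈ Y i → ∀ z : E,
      (inner A u z : A) = inner A u (Q i z) := by
    intro i u hu z
    conv_lhs => rw [← hQsum z]
    rw [CStarModuleOld.inner_sum_right]
    exact Finset.sum_eq_single_of_mem i (Finset.mem_univ i)
      (fun j _ hji => horth i j (Ne.symm hji) u hu (Q j z) (hQmem z j))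
  -- Q i s = Q i (x i)
  have hQs : ∀ i, Q i s = Q i (x i) := by
    obtain ⟨f, _, hfu⟩ := huniq s
    have h1 : (fun i => Q i s) = f := hfu _ ⟨fun i => hQmem s i, hQsum s⟩
    have h2 : (fun i => Q i (x i)) = f := hfu _ ⟨fun i => hQmem _ i, hs.symm⟩
    intro i
    rw [show Q i s = f i from congrFun h1 i, show Q i (x i) = f i from congrFun h2 i]
  -- decomposition of the inner product of z with itself
  have hzz : ∀ z : E, (inner A z z : A) = ∑ i, (inner A (Q i z) (Q i z) : A) := by
    intro z
    nth_rewrite 1 [← hQsum z]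
    rw [CStarModuleOld.inner_sum_left]
    exact Finset.sum_congr rfl fun i _ => key i (Q i z) (hQmem z i) z
  set p : Fin n → A := fun i => (inner A (Q i s) (Q i s) : A) with hp
  have hpnn : ∀ i, 0 ≤ p i := fun i => CStarModuleOld.inner_self_nonneg
  have hpsa : ∀ i, IsSelfAdjoint (p i) := fun i => CStarModuleOld.isSelfAdjoint_inner_self
  have hss : (inner A s s : A) = ∑ i, p i := hzz s
  -- the starNorm set and its boundedness
  set S : Set ℝ := {r : ℝ | ∃ y : Fin n → E, mustar A n y ≤ 1 ∧
    r = Real.sqrt ‖∑ i, star (inner A (y i) (x i) : A) * (inner A (y i) (x i) : A)‖} with hS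
  have hSbdd : BddAbove S := by
    refine ⟨Real.sqrt (∑ j, ‖x j‖ ^ 2), ?_⟩
    rintro r ⟨y, hy, rfl⟩
    refine Real.sqrt_le_sqrt ((norm_sum_le_sum_sq A _).trans (Finset.sum_le_sum fun j _ => ?_))
    have h1 : ‖(inner A (y j) (x j) : A)‖ ≤ ‖x j‖ := by
      calc ‖(inner A (y j) (x j) : A)‖ ≤ ‖y j‖ * ‖x j‖ := CStarModuleOld.norm_inner_le E
        _ ≤ 1 * ‖x j‖ :=
            mul_le_mul_of_nonneg_right (norm_le_one_of_mustar_le_one A y hy j) (norm_nonneg _)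
        _ = ‖x j‖ := one_mul _
    exact pow_le_pow_left₀ (norm_nonneg _) h1 2
  -- it suffices to prove the bound up to an arbitrary δ > 0
  refine le_of_forall_pos_le_add fun δ hδ => ?_
  set ε : ℝ := δ ^ 2 / (2 * n + 2) with hε
  have hεpos : 0 < ε := by positivity
  clear_value ε
  -- functional calculus elements
  set f : ℝ → ℝ := fun t => Real.sqrt t / (t + ε) with hf
  have hspec : ∀ i, ∀ t ∈ quasispectrum ℝ (p i), 0 ≤ t :=
    fun i => quasispectrum_nonneg_of_nonneg (p i) (hpnn i)
  have hfc : ∀ i, ContinuousOn f (quasispectrum ℝ (p i)) := by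
    intro i
    refine ContinuousOn.div (Real.continuous_sqrt.continuousOn) (by fun_prop) ?_
    intro t ht
    have := hspec i t ht
    positivity
  have hf0 : f 0 = 0 := by simp [hf]
  set c : Fin n → A := fun i => cfcₙ f (p i) with hc
  set y : Fin n → E := fun i => Q i s <• (c i) with hy
  have hysa : ∀ i, star (c i) = c i := fun i => (cfcₙ_predicate f (p i)).star_eq
  have hymem : ∀ i, y i ∈ Y i := fun i => hsmul i (c i) (Q i s) (hQmem s i)
  have hinner_y : ∀ (i : Fin n) (z : E), (inner A (y i) z : A) = c i * inner A (Q i s) z := by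
    intro i z
    rw [hy]
    show (inner A (Q i s <• c i) z : A) = _
    rw [CStarModuleOld.inner_op_smul_left, hysa]
  -- ⟨y i, x i⟩ = cfcₙ (fun t => f t * t) (p i)
  have hax : ∀ i, (inner A (y i) (x i) : A) = cfcₙ (fun t => f t * t) (p i) := by
    intro i
    rw [hinner_y, key i (Q i s) (hQmem s i) (x i), hQs i]
    have : (inner A (Q i (x i)) (Q i (x i)) : A) = p i := by rw [← hQs i]
    rw [this]
    conv_lhs => rw [show p i = cfcₙ (fun t : ℝ => t) (p i) from (cfcₙ_id' ℝ (p i) (hpsa i)).symm]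
    rw [← cfcₙ_mul f (fun t : ℝ => t) (p i) (hfc i) hf0 (by fun_prop) rfl]
  -- star a * a  =  cfcₙ (fun t => (f t * t)^2)
  have haxsq : ∀ i, star (inner A (y i) (x i) : A) * (inner A (y i) (x i) : A)
      = cfcₙ (fun t => (f t * t) ^ 2) (p i) := by
    intro i
    have hcont : ContinuousOn (fun t => f t * t) (quasispectrum ℝ (p i)) :=
      (hfc i).mul (by fun_prop)
    have hzero : f 0 * 0 = 0 := mul_zero _
    rw [hax, (cfcₙ_predicate (fun t => f t * t) (p i)).star_eq,
      ← cfcₙ_mul (fun t => f t * t) (fun t => f t * t) (p i) hcont hzero hcont hzero]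
    exact cfcₙ_congr fun t _ => by ring
  -- mustar bound
  have hnormy : ∀ i, ‖y i‖ ≤ 1 := by
    intro i
    rw [CStarModuleOld.norm_eq_sqrt_norm_inner_self (A := A), Real.sqrt_le_one]
    have : (inner A (y i) (y i) : A) = cfcₙ (fun t => f t * (t * f t)) (p i) := by
      rw [hinner_y]
      have h2 : (inner A (Q i s) (y i) : A) = p i * c i := by
        rw [hy]
        show (inner A (Q i s) (Q i s <• c i) : A) = _
        rw [CStarModuleOld.inner_op_smul_right]
      rw [h2, hc]
      conv_lhs => rw [show p i = cfcₙ (fun t : ℝ => t) (p i) from (cfcₙ_id' ℝ (p i) (hpsa i)).symm]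
      rw [← cfcₙ_mul (fun t : ℝ => t) f (p i) (by fun_prop) rfl (hfc i) hf0,
        ← cfcₙ_mul f (fun t => t * f t) (p i) (hfc i) hf0
          ((continuousOn_id' _).mul (hfc i)) (zero_mul _)]
    rw [this]
    apply norm_cfcₙ_le
    intro t ht
    have h0 : 0 ≤ t := hspec i t ht
    have hss' : Real.sqrt t * Real.sqrt t = t := Real.mul_self_sqrt h0
    have hcalc : f t * (t * f t) = (t * t) / ((t + ε) * (t + ε)) := by
      have hne : t + ε ≠ 0 := by positivity
      have h1 : f t * (t * f t)
          = (Real.sqrt t * Real.sqrt t) * t / ((t + ε) * (t + ε)) := by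
        simp only [hf]
        field_simp
      rw [h1, hss']
    rw [hcalc, Real.norm_of_nonneg (div_nonneg (mul_self_nonneg t) (by positivity)),
      div_le_one (by positivity)]
    nlinarith [mul_nonneg h0 hεpos.le, sq_nonneg ε]
  have hmu : mustar A n y ≤ 1 := by
    apply Real.sSup_le _ zero_le_one
    rintro r ⟨z, hz, rfl⟩
    rw [Real.sqrt_le_one]
    have hsum_le : ∑ i, star (inner A (y i) z : A) * (inner A (y i) z : A)
        ≤ (inner A z z : A) := by
      rw [hzz z]
      refine Finset.sum_le_sum fun i _ => ?_
      have h1 : (inner A (y i) z : A) = inner A (y i) (Q i z) := key i (y i) (hymem i) z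
      have h2 : star (inner A (y i) (Q i z) : A) * (inner A (y i) (Q i z) : A)
          ≤ ‖y i‖ ^ 2 • (inner A (Q i z) (Q i z) : A) := by
        rw [CStarModuleOld.star_inner]
        exact CStarModuleOld.inner_mul_inner_swap_le
      have h3 : ‖y i‖ ^ 2 • (inner A (Q i z) (Q i z) : A)
          ≤ (inner A (Q i z) (Q i z) : A) := by
        have h4 : (0:ℝ) ≤ 1 - ‖y i‖ ^ 2 := by
          have := hnormy i
          nlinarith [norm_nonneg (y i)]
        have := smul_nonneg h4 (CStarModuleOld.inner_self_nonneg (A := A) (x := Q i z))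
        rw [sub_smul, one_smul, sub_nonneg] at this
        exact this
      rw [h1]
      exact h2.trans h3
    have hnn : (0:A) ≤ ∑ i, star (inner A (y i) z : A) * (inner A (y i) z : A) :=
      Finset.sum_nonneg fun i _ => star_mul_self_nonneg _
    calc ‖∑ i, star (inner A (y i) z : A) * (inner A (y i) z : A)‖
        ≤ ‖(inner A z z : A)‖ := CStarAlgebra.norm_le_norm_of_nonneg_of_le hnn hsum_le
      _ = ‖z‖ ^ 2 := (CStarModuleOld.norm_sq_eq (A := A)).symm
      _ ≤ 1 := by nlinarith [norm_nonneg z]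
  -- membership in S
  have hmemS : Real.sqrt ‖∑ i, star (inner A (y i) (x i) : A) * (inner A (y i) (x i) : A)‖ ∈ S :=
    ⟨y, hmu, rfl⟩
  -- the norm estimate: ‖⟨s,s⟩‖ ≤ ‖∑ aᵢ*aᵢ‖ + 2nε
  have hdiff : (inner A s s : A) - ∑ i, star (inner A (y i) (x i) : A) * (inner A (y i) (x i) : A)
      = ∑ i, cfcₙ (fun t => t - (f t * t) ^ 2) (p i) := by
    rw [hss, ← Finset.sum_sub_distrib]
    refine Finset.sum_congr rfl fun i _ => ?_
    rw [haxsq i,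
      cfcₙ_sub (fun t : ℝ => t) (fun t => (f t * t) ^ 2) (p i) (by fun_prop) rfl
        (((hfc i).mul (by fun_prop)).pow 2) (by simp [hf0]),
      cfcₙ_id' ℝ (p i) (hpsa i)]
  have hterm_norm : ∀ i, ‖cfcₙ (fun t => t - (f t * t) ^ 2) (p i)‖ ≤ 2 * ε := by
    intro i
    apply norm_cfcₙ_le
    intro t ht
    have h0 : 0 ≤ t := hspec i t ht
    have hsq : Real.sqrt t ^ 2 = t := Real.sq_sqrt h0
    have hden : (0:ℝ) < (t + ε) ^ 2 := by positivity
    have hval : (f t * t) ^ 2 = t ^ 3 / (t + ε) ^ 2 := by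
      simp only [hf]
      rw [mul_pow, div_pow, hsq, div_mul_eq_mul_div]
      ring_nf
    rw [hval]
    have h1 : t - 2 * ε ≤ t ^ 3 / (t + ε) ^ 2 := by
      rw [le_div_iff₀ hden]
      nlinarith [mul_nonneg h0 (mul_nonneg hεpos.le hεpos.le)]
    have h2 : t ^ 3 / (t + ε) ^ 2 ≤ t := by
      rw [div_le_iff₀ hden]
      nlinarith [mul_nonneg (mul_nonneg h0 h0) hεpos.le,
        mul_nonneg h0 (mul_nonneg hεpos.le hεpos.le)]
    rw [Real.norm_eq_abs, abs_le]
    constructor <;> linarith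
  -- abbreviate the sum
  set T : A := ∑ i, star (inner A (y i) (x i) : A) * (inner A (y i) (x i) : A) with hT
  have hdiffnorm : ‖(inner A s s : A) - T‖ ≤ 2 * (n:ℝ) * ε := by
    rw [hdiff]
    calc ‖∑ i, cfcₙ (fun t => t - (f t * t) ^ 2) (p i)‖
        ≤ ∑ i : Fin n, ‖cfcₙ (fun t => t - (f t * t) ^ 2) (p i)‖ := norm_sum_le _ _
      _ ≤ ∑ _i : Fin n, 2 * ε := Finset.sum_le_sum fun i _ => hterm_norm i
      _ = 2 * (n:ℝ) * ε := by
          rw [Finset.sum_const, Finset.card_univ, Fintype.card_fin, nsmul_eq_mul]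
          ring
  have hTnorm : ‖(inner A s s : A)‖ ≤ ‖T‖ + 2 * (n:ℝ) * ε := by
    calc ‖(inner A s s : A)‖ = ‖T + ((inner A s s : A) - T)‖ := by rw [add_sub_cancel]
      _ ≤ ‖T‖ + ‖(inner A s s : A) - T‖ := norm_add_le _ _
      _ ≤ ‖T‖ + 2 * (n:ℝ) * ε := by linarith
  have hsqrtT : Real.sqrt ‖T‖ ≤ starNorm A n x := le_csSup hSbdd hmemS
  have h2nε : Real.sqrt (2 * (n:ℝ) * ε) ≤ δ := by
    rw [show (2 * (n:ℝ) * ε) = (2 * (n:ℝ)) * (δ ^ 2 / (2 * (n:ℝ) + 2)) from by rw [hε]]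
    rw [Real.sqrt_le_left hδ.le, mul_div_assoc',
      div_le_iff₀ (show (0:ℝ) < 2 * (n:ℝ) + 2 by positivity)]
    nlinarith [sq_nonneg δ, Nat.cast_nonneg (α := ℝ) n]
  calc ‖s‖ = Real.sqrt ‖(inner A s s : A)‖ := by
        rw [CStarModuleOld.norm_eq_sqrt_norm_inner_self (A := A)]
    _ ≤ Real.sqrt (‖T‖ + 2 * (n:ℝ) * ε) := Real.sqrt_le_sqrt hTnorm
    _ ≤ Real.sqrt ‖T‖ + Real.sqrt (2 * (n:ℝ) * ε) := sqrt_add_le' _ _ (by positivity)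
    _ ≤ starNorm A n x + δ := add_le_add hsqrtT h2nε
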